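/- Let V : ℝⁿ → ℝⁿ be Lipschitz continuous and satisfy condition (H). Then there exists C > 0 such that for all θ ∈ ℝ and x,y ∈ ℝⁿ, ‖Ψ₄^V(θ,x) − x − θV(x) − Ψ₄^V(θ,y) + y + θV(y)‖ ≤ C(θ² + |θ|⁵)‖x − y‖. -/
import Mathlib


noncomputable section

/-- Euclidean space ℝⁿ. -/
abbrev Vec (n : ℕ) : Type := EuclideanSpace ℝ (Fin n)

/-- Classical fourth-order Runge–Kutta map `Ψ₄^V`. -/
def rk4 {n : ℕ} (V : Vec n → Vec n) (θ : ℝ) (x : Vec n) : Vec n :=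
  x + (θ / 6) • (V x + (2 : ℝ) • V (x + (θ / 2) • V x)
    + (2 : ℝ) • V (x + (θ / 2) • V (x + (θ / 2) • V x))
    + V (x + θ • V (x + (θ / 2) • V (x + (θ / 2) • V x))))

/-- Condition (H) on a vector field `V`. -/
def CondH {n : ℕ} (V : Vec n → Vec n) : Prop :=
  ∃ C : ℝ, 0 < C ∧ ∀ (θ : ℝ) (x y z w : Vec n),
    ‖V (x + θ • V z) + V y - V x - V (y + θ • V w)‖ ≤
      C * |θ| * (‖x - y‖ + (1 + |θ|) * ‖z - w‖)

lemma cube_le (t : ℝ) (ht : 0 ≤ t) : t^3 ≤ t^2 + t^5 := by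
  nlinarith [mul_nonneg (mul_nonneg (mul_nonneg ht ht) ht) (sq_nonneg (t-1)),
    mul_nonneg (mul_nonneg ht ht) (sq_nonneg (2*t-1))]

lemma quart_le (t : ℝ) (ht : 0 ≤ t) : t^4 ≤ t^2 + t^5 := by
  nlinarith [mul_nonneg (mul_nonneg (mul_nonneg ht ht) ht) (sq_nonneg (t-1)),
    mul_nonneg (mul_nonneg ht ht) (sq_nonneg (2*t-1))]

lemma poly_aux (t K : ℝ) (ht : 0 ≤ t) (hK : 1 ≤ K) :
    t^2 * ((2 + t/2) + (1 + (1 + t/2) * (1 + K*(t/2)))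
      + (1 + (1 + t) * (1 + (t/2) * (K * (1 + K*(t/2))))))
      ≤ 6 * (1+K)^3 * (t^2 + t^5) := by
  have h3 := cube_le t ht
  have h4 := quart_le t ht
  have hK0 : (0:ℝ) ≤ K := by linarith
  nlinarith [mul_le_mul_of_nonneg_left h3 hK0,
    mul_le_mul_of_nonneg_left h4 (mul_nonneg hK0 hK0),
    mul_le_mul_of_nonneg_left h4 hK0,
    mul_le_mul_of_nonneg_left h3 (mul_nonneg hK0 hK0),
    mul_nonneg (mul_nonneg hK0 hK0) hK0, sq_nonneg (K-1),
    mul_nonneg (mul_nonneg (mul_nonneg ht ht) (mul_nonneg ht ht)) ht]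


set_option maxHeartbeats 1600000 in
/-- stability of the fourth-order Runge–Kutta map for a Lipschitz
vector field satisfying condition (H). -/
theorem rk4_stability {n : ℕ} (V : Vec n → Vec n)
    (hLip : ∃ L : NNReal, LipschitzWith L V) (hH : CondH V) :
    ∃ C : ℝ, 0 < C ∧ ∀ (θ : ℝ) (x y : Vec n),
      ‖rk4 V θ x - x - θ • V x - rk4 V θ y + y + θ • V y‖ ≤
        C * (θ ^ 2 + |θ| ^ 5) * ‖x - y‖ := by
  obtain ⟨L, hL⟩ := hLip
  obtain ⟨CH, hCH0, hCH⟩ := hH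
  have hK1 : (1:ℝ) ≤ (L : ℝ) + 1 := by linarith [NNReal.coe_nonneg L]
  have hK0 : (0:ℝ) ≤ (L : ℝ) + 1 := by positivity
  set K : ℝ := (L : ℝ) + 1 with hKdef
  have hV : ∀ u v : Vec n, ‖V u - V v‖ ≤ K * ‖u - v‖ := by
    intro u v
    have h := hL.dist_le_mul u v
    rw [dist_eq_norm, dist_eq_norm] at h
    nlinarith [norm_nonneg (u - v)]
  refine ⟨CH * (1 + K)^3, by positivity, ?_⟩
  intro θ x y
  have ht : (0:ℝ) ≤ |θ| := abs_nonneg θ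
  have ha : (0:ℝ) ≤ ‖x - y‖ := norm_nonneg _
  have ht2 : |θ / 2| = |θ| / 2 := by rw [abs_div]; norm_num
  have hd1 : ‖(x + (θ/2) • V x) - (y + (θ/2) • V y)‖ ≤ (1 + K * (|θ|/2)) * ‖x - y‖ := by
    have heq : (x + (θ/2) • V x) - (y + (θ/2) • V y)
        = (x - y) + (θ/2) • (V x - V y) := by module
    rw [heq]
    calc ‖(x - y) + (θ/2) • (V x - V y)‖
        ≤ ‖x - y‖ + ‖(θ/2) • (V x - V y)‖ := norm_add_le _ _
      _ = ‖x - y‖ + (|θ|/2) * ‖V x - V y‖ := by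
          rw [norm_smul, Real.norm_eq_abs, ht2]
      _ ≤ ‖x - y‖ + (|θ|/2) * (K * ‖x - y‖) := by
          have := mul_le_mul_of_nonneg_left (hV x y) (by positivity : (0:ℝ) ≤ |θ|/2)
          linarith
      _ = (1 + K * (|θ|/2)) * ‖x - y‖ := by ring
  have hd2 : ‖(x + (θ/2) • V (x + (θ/2) • V x)) - (y + (θ/2) • V (y + (θ/2) • V y))‖
      ≤ (1 + (|θ|/2) * (K * (1 + K * (|θ|/2)))) * ‖x - y‖ := by
    have heq : (x + (θ/2) • V (x + (θ/2) • V x)) - (y + (θ/2) • V (y + (θ/2) • V y))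
        = (x - y) + (θ/2) • (V (x + (θ/2) • V x) - V (y + (θ/2) • V y)) := by module
    rw [heq]
    calc ‖(x - y) + (θ/2) • (V (x + (θ/2) • V x) - V (y + (θ/2) • V y))‖
        ≤ ‖x - y‖ + ‖(θ/2) • (V (x + (θ/2) • V x) - V (y + (θ/2) • V y))‖ :=
          norm_add_le _ _
      _ = ‖x - y‖ + (|θ|/2) * ‖V (x + (θ/2) • V x) - V (y + (θ/2) • V y)‖ := by
          rw [norm_smul, Real.norm_eq_abs, ht2]
      _ ≤ ‖x - y‖ + (|θ|/2) * (K * ((1 + K * (|θ|/2)) * ‖x - y‖)) := by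
          have h1 := hV (x + (θ/2) • V x) (y + (θ/2) • V y)
          have h2 : K * ‖(x + (θ/2) • V x) - (y + (θ/2) • V y)‖
              ≤ K * ((1 + K * (|θ|/2)) * ‖x - y‖) := mul_le_mul_of_nonneg_left hd1 hK0
          have h3 := mul_le_mul_of_nonneg_left (le_trans h1 h2)
            (by positivity : (0:ℝ) ≤ |θ|/2)
          linarith
      _ = (1 + (|θ|/2) * (K * (1 + K * (|θ|/2)))) * ‖x - y‖ := by ring
  have hA2 := hCH (θ/2) x y x y
  have hA3 := hCH (θ/2) x y (x + (θ/2) • V x) (y + (θ/2) • V y)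
  have hA4 := hCH θ x y (x + (θ/2) • V (x + (θ/2) • V x))
    (y + (θ/2) • V (y + (θ/2) • V y))
  rw [ht2] at hA2 hA3
  have hB2 : ‖V (x + (θ/2) • V x) + V y - V x - V (y + (θ/2) • V y)‖
      ≤ CH * (|θ|/2) * (‖x - y‖ + (1 + |θ|/2) * ‖x - y‖) := hA2
  have hB3 : ‖V (x + (θ/2) • V (x + (θ/2) • V x)) + V y - V x
        - V (y + (θ/2) • V (y + (θ/2) • V y))‖
      ≤ CH * (|θ|/2) * (‖x - y‖ + (1 + |θ|/2) * ((1 + K * (|θ|/2)) * ‖x - y‖)) := by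
    refine le_trans hA3 ?_
    have := mul_le_mul_of_nonneg_left hd1
      (by positivity : (0:ℝ) ≤ CH * (|θ|/2) * (1 + |θ|/2))
    nlinarith [this]
  have hB4 : ‖V (x + θ • V (x + (θ/2) • V (x + (θ/2) • V x))) + V y - V x
        - V (y + θ • V (y + (θ/2) • V (y + (θ/2) • V y)))‖
      ≤ CH * |θ| * (‖x - y‖ + (1 + |θ|) * ((1 + (|θ|/2) * (K * (1 + K * (|θ|/2)))) * ‖x - y‖)) := by
    refine le_trans hA4 ?_
    have := mul_le_mul_of_nonneg_left hd2
      (by positivity : (0:ℝ) ≤ CH * |θ| * (1 + |θ|))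
    nlinarith [this]
  have hid : rk4 V θ x - x - θ • V x - rk4 V θ y + y + θ • V y
      = (θ/6) • ((2:ℝ) • (V (x + (θ/2) • V x) + V y - V x - V (y + (θ/2) • V y))
        + (2:ℝ) • (V (x + (θ/2) • V (x + (θ/2) • V x)) + V y - V x
            - V (y + (θ/2) • V (y + (θ/2) • V y)))
        + (V (x + θ • V (x + (θ/2) • V (x + (θ/2) • V x))) + V y - V x
            - V (y + θ • V (y + (θ/2) • V (y + (θ/2) • V y))))) := by
    simp only [rk4]; module
  rw [hid]
  have ht6 : |θ / 6| = |θ| / 6 := by rw [abs_div]; norm_num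
  have hnorm : ‖(θ/6) • ((2:ℝ) • (V (x + (θ/2) • V x) + V y - V x - V (y + (θ/2) • V y))
        + (2:ℝ) • (V (x + (θ/2) • V (x + (θ/2) • V x)) + V y - V x
            - V (y + (θ/2) • V (y + (θ/2) • V y)))
        + (V (x + θ • V (x + (θ/2) • V (x + (θ/2) • V x))) + V y - V x
            - V (y + θ • V (y + (θ/2) • V (y + (θ/2) • V y)))))‖
      ≤ (|θ|/6) * (2 * ‖V (x + (θ/2) • V x) + V y - V x - V (y + (θ/2) • V y)‖
        + 2 * ‖V (x + (θ/2) • V (x + (θ/2) • V x)) + V y - V x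
            - V (y + (θ/2) • V (y + (θ/2) • V y))‖
        + ‖V (x + θ • V (x + (θ/2) • V (x + (θ/2) • V x))) + V y - V x
            - V (y + θ • V (y + (θ/2) • V (y + (θ/2) • V y)))‖) := by
    rw [norm_smul, Real.norm_eq_abs, ht6]
    gcongr
    refine le_trans norm_add₃_le ?_
    rw [norm_smul, norm_smul]
    norm_num
  refine le_trans hnorm ?_
  have hpoly := poly_aux (|θ|) K ht hK1
  have hθ2 : θ ^ 2 = |θ| ^ 2 := (sq_abs θ).symm
  rw [hθ2]
  nlinarith [mul_le_mul_of_nonneg_left hB2 (by positivity : (0:ℝ) ≤ |θ|/6 * 2),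
    mul_le_mul_of_nonneg_left hB3 (by positivity : (0:ℝ) ≤ |θ|/6 * 2),
    mul_le_mul_of_nonneg_left hB4 (by positivity : (0:ℝ) ≤ |θ|/6),
    mul_le_mul_of_nonneg_left hpoly (by positivity : (0:ℝ) ≤ CH * ‖x - y‖ / 6)]
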